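/- Let F ⊆ E be fields of characteristic zero and let α_1,…,α_n be distinct elements of E such that every elementary symmetric function e_k(α_1,…,α_n) lies in F. Then for every subgroup G of S_n there exists a polynomial Φ ∈ F[x_1,…,x_n] such that the set {σ ∈ S_n : Φ(α_{σ(1)},…,α_{σ(n)}) = Φ(α_1,…,α_n)} equals G, and moreover this set coincides with the stabilizer {σ ∈ S_n : σΦ = Φ} of Φ as a polynomial. -/

import Mathlib

open MvPolynomial

/-- Since `F` is infinite, we can choose an element of `F` whose image in `E` avoids
any given finite set. -/
lemma exists_avoid_of_finite {F E : Type*} [Field F] [Field E] [Algebra F E] [Infinite F]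
    {B : Set E} (hB : B.Finite) : ∃ t : F, algebraMap F E t ∉ B := by
  have h1 : (Set.range (algebraMap F E)).Infinite :=
    Set.infinite_range_of_injective (algebraMap F E).injective
  obtain ⟨x, ⟨t, rfl⟩, hxB⟩ := (h1.diff hB).nonempty
  exact ⟨t, hxB⟩

/-- **Theorem 6.1.** Let `F ⊆ E` be fields of characteristic zero and `α_1,…,α_n ∈ E` distinct
with all elementary symmetric functions `e_k(α_1,…,α_n)` in `F`.  Then every subgroup
`G ≤ S_n` is the set of permutations `σ` with `Φ(α_{σ(1)},…,α_{σ(n)}) = Φ(α_1,…,α_n)` for some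
polynomial `Φ ∈ F[x_1,…,x_n]`, and this set agrees with the stabilizer of `Φ` as a polynomial
(i.e. `Φ` is "Galois"). -/
theorem exists_galois_polynomial_with_stabilizer
    (F E : Type*) [Field F] [Field E] [Algebra F E] [CharZero F]
    (n : ℕ) (α : Fin n → E) (hα : Function.Injective α)
    (he : ∀ k : ℕ, aeval α (esymm (Fin n) F k) ∈ Set.range (algebraMap F E))
    (G : Subgroup (Equiv.Perm (Fin n))) :
    ∃ Φ : MvPolynomial (Fin n) F,
      {σ : Equiv.Perm (Fin n) | aeval (α ∘ ⇑σ) Φ = aeval α Φ} =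
        (G : Set (Equiv.Perm (Fin n))) ∧
      {σ : Equiv.Perm (Fin n) | aeval (α ∘ ⇑σ) Φ = aeval α Φ} =
        {σ : Equiv.Perm (Fin n) | rename ⇑σ Φ = Φ} := by
  classical
  set φ := algebraMap F E with hφ
  -- the difference polynomials used to choose `t`
  set p : Equiv.Perm (Fin n) → Equiv.Perm (Fin n) → Polynomial E :=
    fun ρ ρ' => ∑ i : Fin n, Polynomial.C (α (ρ i) - α (ρ' i)) * Polynomial.X ^ (i : ℕ)
    with hpdef
  have hp : ∀ ρ ρ', ρ ≠ ρ' → p ρ ρ' ≠ 0 := by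
    intro ρ ρ' h h0
    obtain ⟨i, hi⟩ : ∃ i, ρ i ≠ ρ' i := by
      by_contra hc; push_neg at hc; exact h (Equiv.ext hc)
    have hcoeff : (p ρ ρ').coeff (i : ℕ) = α (ρ i) - α (ρ' i) := by
      simp only [hpdef, Polynomial.finset_sum_coeff, Polynomial.coeff_C_mul,
        Polynomial.coeff_X_pow]
      rw [Finset.sum_eq_single i]
      · simp
      · intro j _ hj
        have : ((i : ℕ) = (j : ℕ)) = False := by
          simp [Fin.val_eq_val, (Ne.symm hj)]
        simp [this]
      · simp
    rw [h0] at hcoeff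
    simp only [Polynomial.coeff_zero] at hcoeff
    exact hi (hα (sub_eq_zero.mp hcoeff.symm))
  have hB1 : (⋃ q : Equiv.Perm (Fin n) × Equiv.Perm (Fin n),
      ⋃ (_ : q.1 ≠ q.2), {x | (p q.1 q.2).IsRoot x}).Finite := by
    refine Set.finite_iUnion fun q => Set.finite_iUnion fun hq => ?_
    exact Polynomial.finite_setOf_isRoot (hp _ _ hq)
  obtain ⟨t, ht⟩ := exists_avoid_of_finite (F := F) hB1
  -- the values `v ρ = Σ tⁱ α_{ρ(i)}`
  set v : Equiv.Perm (Fin n) → E := fun ρ => ∑ i : Fin n, φ t ^ (i : ℕ) * α (ρ i) with hvdef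
  have hv : Function.Injective v := by
    intro ρ ρ' hvv
    by_contra h
    have heval : (p ρ ρ').eval (φ t) = v ρ - v ρ' := by
      simp only [hpdef, hvdef, Polynomial.eval_finset_sum, Polynomial.eval_mul,
        Polynomial.eval_C, Polynomial.eval_pow, Polynomial.eval_X, ← Finset.sum_sub_distrib]
      congr 1; funext i; ring
    have : φ t ∈ ⋃ q : Equiv.Perm (Fin n) × Equiv.Perm (Fin n),
        ⋃ (_ : q.1 ≠ q.2), {x | (p q.1 q.2).IsRoot x} := by
      refine Set.mem_iUnion.mpr ⟨(ρ, ρ'), Set.mem_iUnion.mpr ⟨h, ?_⟩⟩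
      simp only [Set.mem_setOf_eq, Polynomial.IsRoot, heval, hvv, sub_self]
    exact ht this
  -- resolvent polynomials used to choose `c`
  set P : Equiv.Perm (Fin n) → Polynomial E := fun τ =>
    (∏ σ : G, (Polynomial.X - Polynomial.C (v (τ * σ)))) -
      ∏ σ : G, (Polynomial.X - Polynomial.C (v σ)) with hPdef
  have hP : ∀ τ : Equiv.Perm (Fin n), τ ∉ G → P τ ≠ 0 := by
    intro τ hτ h0
    have heval : (P τ).eval (v τ) = 0 := by rw [h0, Polynomial.eval_zero]
    have h1 : (∏ σ : G, (Polynomial.X - Polynomial.C (v (τ * σ)))).eval (v τ) = 0 := by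
      rw [Polynomial.eval_prod]
      refine Finset.prod_eq_zero (Finset.mem_univ (1 : G)) ?_
      simp
    have h2 : (∏ σ : G, (Polynomial.X - Polynomial.C (v σ))).eval (v τ) ≠ 0 := by
      rw [Polynomial.eval_prod]
      refine Finset.prod_ne_zero_iff.mpr fun σ _ => ?_
      simp only [Polynomial.eval_sub, Polynomial.eval_X, Polynomial.eval_C, sub_ne_zero]
      exact fun hc => hτ (by rw [show τ = (σ : Equiv.Perm (Fin n)) from hv hc]; exact σ.2)
    rw [hPdef] at heval
    simp only [Polynomial.eval_sub, h1, zero_sub, neg_eq_zero] at heval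
    exact h2 heval
  have hB2 : (⋃ τ : Equiv.Perm (Fin n), ⋃ (_ : τ ∉ G), {x | (P τ).IsRoot x}).Finite := by
    refine Set.finite_iUnion fun τ => Set.finite_iUnion fun hτ => ?_
    exact Polynomial.finite_setOf_isRoot (hP τ hτ)
  obtain ⟨c, hc⟩ := exists_avoid_of_finite (F := F) hB2
  -- the polynomial Φ
  set θ : MvPolynomial (Fin n) F := ∑ i : Fin n, C (t ^ (i : ℕ)) * X i with hθdef
  set Φ : MvPolynomial (Fin n) F :=
    ∏ σ : G, (C c - rename (σ : Equiv.Perm (Fin n)) θ) with hΦdef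
  have hθeval : ∀ β : Fin n → E, aeval β θ = ∑ i : Fin n, φ t ^ (i : ℕ) * β i := by
    intro β
    simp [hθdef, map_sum, map_pow]
    rfl
  have haevren : ∀ (β : Fin n → E) (ρ : Equiv.Perm (Fin n)),
      aeval β (rename (⇑ρ) θ) = ∑ i : Fin n, φ t ^ (i : ℕ) * β (ρ i) := by
    intro β ρ
    rw [aeval_rename, hθeval]
    rfl
  have hΦeval : ∀ τ : Equiv.Perm (Fin n),
      aeval (α ∘ ⇑τ) Φ = ∏ σ : G, (φ c - v (τ * σ)) := by
    intro τ
    rw [hΦdef, map_prod]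
    refine Finset.prod_congr rfl fun σ _ => ?_
    rw [map_sub, aeval_C, haevren]
    simp [hvdef, Equiv.Perm.mul_apply, Function.comp]
    rfl
  have hΦeval1 : aeval α Φ = ∏ σ : G, (φ c - v σ) := by
    rw [hΦdef, map_prod]
    refine Finset.prod_congr rfl fun σ _ => ?_
    rw [map_sub, aeval_C, haevren]
  -- membership in G gives invariance as a polynomial
  have hren : ∀ τ : Equiv.Perm (Fin n), τ ∈ G → rename (⇑τ) Φ = Φ := by
    intro τ hτ
    rw [hΦdef, map_prod]
    have key : ∀ σ : G, rename (⇑τ) (C c - rename (↑σ) θ) =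
        C c - rename ↑(((⟨τ, hτ⟩ : G) * σ : G) : Equiv.Perm (Fin n)) θ := by
      intro σ
      rw [map_sub, rename_C, rename_rename]
      simp [Equiv.Perm.coe_mul, Function.comp]
    rw [Finset.prod_congr rfl fun σ _ => key σ]
    exact Fintype.prod_equiv (Equiv.mulLeft (⟨τ, hτ⟩ : G))
      (fun σ : G => C c - rename (↑((⟨τ, hτ⟩ : G) * σ) : Equiv.Perm (Fin n)) θ)
      (fun σ : G => C c - rename (↑σ : Equiv.Perm (Fin n)) θ)
      (fun σ => by rw [Equiv.coe_mulLeft])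
  -- membership in G gives equal evaluation
  have hGeval : ∀ τ : Equiv.Perm (Fin n), τ ∈ G → aeval (α ∘ ⇑τ) Φ = aeval α Φ := by
    intro τ hτ
    rw [hΦeval, hΦeval1]
    have : ∀ σ : G, v (τ * σ) = v ↑(((⟨τ, hτ⟩ : G) * σ : G) : Equiv.Perm (Fin n)) := by
      intro σ
      simp [Subgroup.coe_mul]
    rw [Finset.prod_congr rfl fun σ _ => by rw [this σ]]
    exact Fintype.prod_equiv (Equiv.mulLeft (⟨τ, hτ⟩ : G))
      (fun σ : G => φ c - v (↑((⟨τ, hτ⟩ : G) * σ) : Equiv.Perm (Fin n)))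
      (fun σ : G => φ c - v ↑σ)
      (fun σ => by rw [Equiv.coe_mulLeft])
  -- equal evaluation forces membership in G
  have hevalG : ∀ τ : Equiv.Perm (Fin n), aeval (α ∘ ⇑τ) Φ = aeval α Φ → τ ∈ G := by
    intro τ hτeq
    by_contra hτ
    have heval : (P τ).eval (φ c) = 0 := by
      rw [hPdef]
      simp only [Polynomial.eval_sub, Polynomial.eval_prod, Polynomial.eval_X,
        Polynomial.eval_C]
      rw [← hΦeval, ← hΦeval1, hτeq, sub_self]
    have : φ c ∈ ⋃ τ' : Equiv.Perm (Fin n), ⋃ (_ : τ' ∉ G), {x | (P τ').IsRoot x} :=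
      Set.mem_iUnion.mpr ⟨τ, Set.mem_iUnion.mpr ⟨hτ, heval⟩⟩
    exact hc this
  refine ⟨Φ, ?_, ?_⟩
  · ext τ
    exact ⟨fun h => hevalG τ h, fun h => hGeval τ h⟩
  · ext τ
    constructor
    · intro h
      exact hren τ (hevalG τ h)
    · intro h
      have := congrArg (aeval α) h
      rwa [aeval_rename] at this
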